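/- Let b ≥ 1 and 0 < m ≤ M, and set p₁ = m^{2^b/(2^b+1)} · M^{1/(2^b+1)}. For every price sequence σ of length n ≥ 1 with all prices in [m, M], if max_k σ k < p₁, then max_k σ k ≤ (M/m)^{1/(2^b+1)} · profit(RPP(p₁), σ). -/

import Mathlib

/-- The maximum price of a price sequence of positive length. -/
noncomputable def maxPrice {n : ℕ} (hn : 0 < n) (σ : Fin n → ℝ) : ℝ :=
  Finset.univ.sup' ⟨⟨0, hn⟩, Finset.mem_univ _⟩ σ

/-- The profit of the reservation-price strategy `RPP p` on the price sequence
`σ`: it accepts at the least index `k` with `σ k ≥ p`, obtaining `σ k`; if no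
such index exists it must accept the last price `σ (n-1)`. -/
noncomputable def rppProfit {n : ℕ} (hn : 0 < n) (p : ℝ) (σ : Fin n → ℝ) : ℝ :=
  if h : ∃ k : Fin n, p ≤ σ k then
    σ ((Finset.univ.filter (fun k : Fin n => p ≤ σ k)).min'
      (h.imp fun k hk => Finset.mem_filter.mpr ⟨Finset.mem_univ _, hk⟩))
  else σ ⟨n - 1, Nat.sub_lt hn one_pos⟩

/-- (First case of the upper-bound proof.) With
`p₁ = m^{2^b/(2^b+1)} M^{1/(2^b+1)}`, if the maximum price of `σ` is below `p₁`,
then `RPP(p₁)` is `(M/m)^{1/(2^b+1)}`-competitive on `σ`. -/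
theorem rpp_competitive_below_first_reservation_price
    (b : ℕ) (hb : 1 ≤ b) (m M : ℝ) (hm : 0 < m) (hmM : m ≤ M)
    (n : ℕ) (hn : 0 < n) (σ : Fin n → ℝ) (hσ : ∀ i, m ≤ σ i ∧ σ i ≤ M)
    (hmax : maxPrice hn σ < m ^ ((2 : ℝ) ^ b / (2 ^ b + 1)) * M ^ ((1 : ℝ) / (2 ^ b + 1))) :
    maxPrice hn σ ≤ (M / m) ^ ((1 : ℝ) / (2 ^ b + 1)) *
      rppProfit hn (m ^ ((2 : ℝ) ^ b / (2 ^ b + 1)) * M ^ ((1 : ℝ) / (2 ^ b + 1))) σ := by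
  set p₁ := m ^ ((2 : ℝ) ^ b / (2 ^ b + 1)) * M ^ ((1 : ℝ) / (2 ^ b + 1)) with hp₁
  have hpos : (0:ℝ) < (2:ℝ) ^ b + 1 := by positivity
  -- no index reaches p₁
  have hnone : ¬ ∃ k : Fin n, p₁ ≤ σ k := by
    rintro ⟨k, hk⟩
    exact absurd (hk.trans (Finset.le_sup' σ (Finset.mem_univ k))) (not_le.mpr hmax)
  have hprofit : rppProfit hn p₁ σ = σ ⟨n - 1, Nat.sub_lt hn one_pos⟩ := by
    rw [rppProfit, dif_neg hnone]
  have hm' : m ≤ rppProfit hn p₁ σ := by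
    rw [hprofit]; exact (hσ _).1
  have hkey : p₁ = m * (M / m) ^ ((1 : ℝ) / (2 ^ b + 1)) := by
    have he : (2:ℝ)^b/(2^b+1) = 1 - 1/(2^b+1) := by field_simp; ring
    rw [hp₁, he, Real.rpow_sub hm, Real.rpow_one,
      Real.div_rpow (hm.trans_le hmM).le hm.le]
    ring
  have hC : (0:ℝ) < (M / m) ^ ((1 : ℝ) / (2 ^ b + 1)) :=
    Real.rpow_pos_of_pos (div_pos (hm.trans_le hmM) hm) _
  calc maxPrice hn σ ≤ p₁ := hmax.le
    _ = (M / m) ^ ((1 : ℝ) / (2 ^ b + 1)) * m := by rw [hkey]; ring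
    _ ≤ _ := by exact mul_le_mul_of_nonneg_left hm' hC.le
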